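/- arXiv:2005.01184 — 3 statements merged into one kernel-verified Lean document; each statement's English description precedes it below -/
import Mathlib

section
/- Let G = (V, R, U, L, D) be a structure with binary relations satisfying the inverses axiom (R(x,y) ↔ L(y,x) and U(x,y) ↔ D(y,x)), the successor axiom (every x has an R-successor and a U-successor), and the cycle axiom (L(y,x) ∧ U(x,z) ∧ R(z,u) → D(u,y)). Then there exists a homomorphism from the standard grid (ℕ×ℕ, R_0, U_0) into (V, R, U), where R_0 = {((i,j),(i+1,j))} and U_0 = {((i,j),(i,j+1))}. -/
/-- If a (nonempty) structure with binary relations `R, U, L, D` satisfies the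
inverses, successor and cycle axioms, then there is a homomorphism from the
standard grid `(ℕ×ℕ, R₀, U₀)` into `(V, R, U)`. -/
theorem homomorphism_from_standard_grid (V : Type) [Nonempty V]
    (R U L D : V → V → Prop)
    (hinv : ∀ x y, (R x y ↔ L y x) ∧ (U x y ↔ D y x))
    (hsucc : ∀ x, (∃ y, R x y) ∧ (∃ z, U x z))
    (hcyc : ∀ x y z u, L y x → U x z → R z u → D u y) :
    ∃ τ : ℕ × ℕ → V,
      (∀ i j : ℕ, R (τ (i, j)) (τ (i + 1, j))) ∧
      (∀ i j : ℕ, U (τ (i, j)) (τ (i, j + 1))) := by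
  obtain ⟨rsucc, hr⟩ := Classical.axiomOfChoice (fun x => (hsucc x).1)
  obtain ⟨usucc, hu⟩ := Classical.axiomOfChoice (fun x => (hsucc x).2)
  let col0 : ℕ → V := fun j => usucc^[j] (Classical.arbitrary V)
  let τ : ℕ × ℕ → V := fun p => rsucc^[p.1] (col0 p.2)
  have hR : ∀ i j : ℕ, R (τ (i, j)) (τ (i + 1, j)) := by
    intro i j
    simp only [τ, Function.iterate_succ_apply']
    exact hr _
  refine ⟨τ, hR, ?_⟩
  intro i j
  induction i with
  | zero =>
    simp only [τ, col0, Function.iterate_zero_apply, Function.iterate_succ_apply']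
    exact hu _
  | succ i ih =>
    have hL : L (τ (i + 1, j)) (τ (i, j)) := ((hinv _ _).1).mp (hR i j)
    have : D (τ (i + 1, j + 1)) (τ (i + 1, j)) := hcyc _ _ _ _ hL ih (hR i (j + 1))
    exact ((hinv _ _).2).mpr this
end

section
/- Let T be a finite set of tiles (each tile t assigns colors t_R, t_L, t_T, t_B). There exists a T-tiling of ℕ×ℕ if and only if there exists a structure G over the vocabulary {R,U,L,D} ∪ {P_t : t ∈ T} satisfying: the inverses, successor, and cycle axioms; every element belongs to some P_t; the P_t are pairwise disjoint; whenever P_t(x), R(x,y), P_{t'}(y) hold, then t_R = t'_L; and whenever P_t(x), U(x,y), P_{t'}(y) hold, then t_T = t'_B. -/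
/-- A tile: four colors (right, left, top, bottom edges). -/
structure Tile (C : Type) where
  right : C
  left : C
  top : C
  bottom : C

/-- A finite set of tiles `T` tiles `ℕ × ℕ` iff there exists a structure over
the vocabulary `{R,U,L,D} ∪ {P_t : t ∈ T}` satisfying the inverses, successor
and cycle axioms together with the tiling constraints. -/
theorem tiling_iff_structure (C : Type) (T : Set (Tile C)) (hT : T.Finite) :
    (∃ f : ℕ × ℕ → Tile C, (∀ p, f p ∈ T) ∧
      (∀ i j : ℕ, (f (i, j)).right = (f (i + 1, j)).left) ∧
      (∀ i j : ℕ, (f (i, j)).top = (f (i, j + 1)).bottom)) ↔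
    (∃ (V : Type) (R U L D : V → V → Prop) (P : Tile C → V → Prop),
      Nonempty V ∧
      (∀ x y, (R x y ↔ L y x) ∧ (U x y ↔ D y x)) ∧
      (∀ x, (∃ y, R x y) ∧ (∃ z, U x z)) ∧
      (∀ x y z u, L y x → U x z → R z u → D u y) ∧
      (∀ x, ∃ t ∈ T, P t x) ∧
      (∀ t t' x, t ∈ T → t' ∈ T → P t x → P t' x → t = t') ∧
      (∀ t t' x y, t ∈ T → t' ∈ T → P t x → R x y → P t' y →
        t.right = t'.left) ∧
      (∀ t t' x y, t ∈ T → t' ∈ T → P t x → U x y → P t' y →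
        t.top = t'.bottom)) := by
  constructor
  · rintro ⟨f, hfT, hR, hU⟩
    refine ⟨ℕ × ℕ, (fun p q => q = (p.1 + 1, p.2)), (fun p q => q = (p.1, p.2 + 1)),
      (fun q p => q = (p.1 + 1, p.2)), (fun q p => q = (p.1, p.2 + 1)),
      (fun t p => f p = t), ⟨(0, 0)⟩, ?_, ?_, ?_, ?_, ?_, ?_, ?_⟩
    · intro x y; exact ⟨Iff.rfl, Iff.rfl⟩
    · intro x; exact ⟨⟨_, rfl⟩, ⟨_, rfl⟩⟩
    · rintro x y z u rfl rfl rfl; rfl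
    · intro x; exact ⟨f x, hfT x, rfl⟩
    · rintro t t' x _ _ rfl rfl; rfl
    · rintro t t' x y _ _ rfl rfl rfl; exact hR x.1 x.2
    · rintro t t' x y _ _ rfl rfl rfl; exact hU x.1 x.2
  · rintro ⟨V, R, U, L, D, P, ⟨x₀⟩, hinv, hsucc, hcyc, hcov, hdisj, hRc, hUc⟩
    classical
    choose r hr using fun x => (hsucc x).1
    choose u hu using fun x => (hsucc x).2
    -- cycle: U a b → U (r a) (r b)
    have step : ∀ a b, U a b → U (r a) (r b) := by
      intro a b hab
      have := hcyc a (r a) b (r b) ((hinv a (r a)).1.mp (hr a)) hab (hr b)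
      exact ((hinv (r a) (r b)).2.mpr this)
    set g : ℕ × ℕ → V := fun p => (r^[p.1]) ((u^[p.2]) x₀) with hg
    have hgR : ∀ i j, R (g (i, j)) (g (i + 1, j)) := by
      intro i j
      simp only [hg, Function.iterate_succ_apply']
      exact hr _
    have hgU : ∀ i j, U (g (i, j)) (g (i, j + 1)) := by
      intro i j
      simp only [hg]
      induction i with
      | zero => simpa [Function.iterate_succ_apply'] using hu ((u^[j]) x₀)
      | succ n ih => simpa [Function.iterate_succ_apply'] using step _ _ ih
    choose t htT htP using fun x => hcov x
    refine ⟨fun p => t (g p), fun p => htT _, ?_, ?_⟩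
    · intro i j
      exact hRc _ _ _ _ (htT _) (htT _) (htP _) (hgR i j) (htP _)
    · intro i j
      exact hUc _ _ _ _ (htT _) (htT _) (htP _) (hgU i j) (htP _)
end

section
/- If a relational Herbrand sentence contains a conjunct x_i = x_j with distinct variables where x_i is existentially quantified and x_j is universally quantified in its scope (or both are universally quantified), then the sentence is satisfiable if and only if it has a model with a one-element domain. -/
/-- Atomic formulas over a relational vocabulary `σ` (with arities `ar`) and
`n` variables: relation atoms and equality atoms. -/
inductive HAtom (σ : Type) (ar : σ → ℕ) (n : ℕ) : Type
  | rel (r : σ) (args : Fin (ar r) → Fin n) : HAtom σ ar n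
  | eq (i j : Fin n) : HAtom σ ar n

/-- A literal: a polarity (`true` = positive) together with an atom. -/
def HLit (σ : Type) (ar : σ → ℕ) (n : ℕ) : Type := Bool × HAtom σ ar n

/-- Satisfaction of an atom under an interpretation `I` and assignment `α`. -/
def atomSat {σ : Type} {ar : σ → ℕ} {n : ℕ} {D : Type}
    (I : (r : σ) → (Fin (ar r) → D) → Prop) (α : Fin n → D) :
    HAtom σ ar n → Prop
  | .rel r args => I r (fun i => α (args i))
  | .eq i j => α i = α j

/-- Satisfaction of a literal. -/
def litSat {σ : Type} {ar : σ → ℕ} {n : ℕ} {D : Type}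
    (I : (r : σ) → (Fin (ar r) → D) → Prop) (α : Fin n → D)
    (l : HLit σ ar n) : Prop :=
  if l.1 then atomSat I α l.2 else ¬ atomSat I α l.2

/-- Evaluation of a quantifier prefix (`true` = universal, `false` =
existential) over a matrix depending on the assignment; the first quantifier
binds variable `0`. -/
def prefixSat (D : Type) :
    (qs : List Bool) → ((Fin qs.length → D) → Prop) → Prop
  | [], P => P (fun i => i.elim0)
  | q :: qs, P =>
      if q then ∀ d : D, prefixSat D qs (fun f => P (Fin.cons d f))
      else ∃ d : D, prefixSat D qs (fun f => P (Fin.cons d f))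

/-- Satisfaction of a relational Herbrand sentence given by a quantifier
prefix `qs` and a conjunction of literals `lits`. -/
def sentSat (D : Type) {σ : Type} {ar : σ → ℕ}
    (I : (r : σ) → (Fin (ar r) → D) → Prop) (qs : List Bool)
    (lits : List (HLit σ ar qs.length)) : Prop :=
  prefixSat D qs (fun α => ∀ l ∈ lits, litSat I α l)

lemma herbrand_skolem_aux {D : Type} : ∀ (qs : List Bool) (P : (Fin qs.length → D) → Prop),
    prefixSat D qs P →
    ∃ F : (Fin qs.length → D) → (Fin qs.length → D),
      ∀ g : Fin qs.length → D,
        P (F g) ∧ (∀ k, qs.get k = true → F g k = g k) ∧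
        ∀ g' k, qs.get k = false → (∀ m, m < k → g m = g' m) → F g k = F g' k
  | [], P, h => ⟨fun _ => fun i => i.elim0, fun g => ⟨h, fun k => k.elim0, fun g' k => k.elim0⟩⟩
  | q :: qs, P, h => by
    show ∃ F : (Fin (qs.length + 1) → D) → (Fin (qs.length + 1) → D),
      ∀ g : Fin (qs.length + 1) → D,
        P (F g) ∧ (∀ k, (q :: qs).get k = true → F g k = g k) ∧
        ∀ g' k, (q :: qs).get k = false → (∀ m, m < k → g m = g' m) → F g k = F g' k
    have hget0 : (q :: qs).get (0 : Fin (qs.length + 1)) = q := rfl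
    have hgets : ∀ m : Fin qs.length, (q :: qs).get m.succ = qs.get m := fun m => rfl
    cases q with
    | true =>
      simp only [prefixSat, if_pos] at h
      choose F hF using fun d => herbrand_skolem_aux qs _ (h d)
      refine ⟨fun g => Fin.cons (g 0) (F (g 0) (fun m => g m.succ)), fun g => ⟨?_, ?_, ?_⟩⟩
      · exact (hF (g 0) _).1
      · intro k
        revert k
        refine Fin.cases ?_ (fun m => ?_) <;> intro hk
        · simp
        · simp only [Fin.cons_succ]
          exact (hF (g 0) _).2.1 m ((hgets m) ▸ hk)
      · intro g' k
        revert k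
        refine Fin.cases ?_ (fun m => ?_) <;> intro hk hlt
        · rw [hget0] at hk; exact absurd hk (by simp)
        · have h0 : g 0 = g' 0 := hlt (0 : Fin (qs.length + 1)) (Fin.succ_pos m)
          simp only [Fin.cons_succ, h0]
          refine (hF (g' 0) _).2.2 _ m ((hgets m) ▸ hk) ?_
          intro m' hm'
          exact hlt m'.succ (Fin.succ_lt_succ_iff.mpr hm')
    | false =>
      simp only [prefixSat, if_neg] at h
      obtain ⟨d, hd⟩ := h
      obtain ⟨F, hF⟩ := herbrand_skolem_aux qs _ hd
      refine ⟨fun g => Fin.cons d (F (fun m => g m.succ)), fun g => ⟨?_, ?_, ?_⟩⟩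
      · exact (hF _).1
      · intro k
        revert k
        refine Fin.cases ?_ (fun m => ?_) <;> intro hk
        · rw [hget0] at hk; exact absurd hk (by simp)
        · simp only [Fin.cons_succ]
          exact (hF _).2.1 m ((hgets m) ▸ hk)
      · intro g' k
        revert k
        refine Fin.cases ?_ (fun m => ?_) <;> intro hk hlt
        · simp
        · simp only [Fin.cons_succ]
          refine (hF _).2.2 _ m ((hgets m) ▸ hk) ?_
          intro m' hm'
          exact hlt m'.succ (Fin.succ_lt_succ_iff.mpr hm')

/-- If a relational Herbrand sentence contains a conjunct `xᵢ = xⱼ` with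
distinct variables where `xᵢ` is existentially and `xⱼ` universally quantified
in its scope (or both are universally quantified), then it is satisfiable iff
it has a model with a one-element domain. -/
theorem herbrand_pos_eq_sat_iff_one_element (σ : Type) (ar : σ → ℕ)
    (qs : List Bool) (lits : List (HLit σ ar qs.length))
    (i j : Fin qs.length) (hij : i < j)
    (hlit : (true, HAtom.eq i j) ∈ lits)
    (hq : (qs.get i = false ∧ qs.get j = true) ∨
          (qs.get i = true ∧ qs.get j = true)) :
    (∃ (D : Type) (I : (r : σ) → (Fin (ar r) → D) → Prop),
        Nonempty D ∧ sentSat D I qs lits) ↔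
      (∃ (D : Type) (I : (r : σ) → (Fin (ar r) → D) → Prop),
        (∃ d : D, ∀ x : D, x = d) ∧ sentSat D I qs lits) := by
  
  constructor
  · rintro ⟨D, I, ⟨d0⟩, hsat⟩
    obtain ⟨F, hF⟩ := herbrand_skolem_aux qs _ hsat
    have hj : qs.get j = true := by rcases hq with ⟨_, h⟩ | ⟨_, h⟩ <;> exact h
    have hne : i ≠ j := ne_of_lt hij
    have key : ∀ x y : D, x = y := by
      intro x y
      have hx := hF (fun _ => x)
      have hy := hF (fun k => if k = j then y else x)
      have ex : F (fun _ => x) i = F (fun _ => x) j := by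
        have := hx.1 _ hlit
        simpa [litSat, atomSat] using this
      have ey : F (fun k => if k = j then y else x) i
          = F (fun k => if k = j then y else x) j := by
        have := hy.1 _ hlit
        simpa [litSat, atomSat] using this
      have hxj : F (fun _ => x) j = x := hx.2.1 j hj
      have hyj : F (fun k => if k = j then y else x) j = y := by
        rw [hy.2.1 j hj]; simp
      cases hi : qs.get i with
      | false =>
        have hii : F (fun k => if k = j then y else x) i = F (fun _ => x) i := by
          refine hy.2.2 _ i hi ?_
          intro m hm
          simp [ne_of_lt (hm.trans hij)]
        rw [hii, ex, hxj] at ey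
        rw [hyj] at ey
        exact ey
      | true =>
        have hyi : F (fun k => if k = j then y else x) i = x := by
          rw [hy.2.1 i hi]; simp [hne]
        rw [hyi, hyj] at ey
        exact ey
    exact ⟨D, I, ⟨d0, fun x => key x d0⟩, hsat⟩
  · rintro ⟨D, I, ⟨d, _⟩, hsat⟩
    exact ⟨D, I, ⟨d⟩, hsat⟩
end
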